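/- Let φ be a Prompt-LTL formula over P with partition (I,O). Then φ is realizable (i.e., some strategy σ : (2^I)^+ → 2^O realizes φ with respect to some bound k) if and only if there exists k ≥ 1 such that the LTL formula rel(φ) ∧ ψ_k is realizable over the partition (I, O∪{p}). -/

import Mathlib

namespace PromptPaper

/-- Prompt-LTL formulas (in negation normal form) over atomic propositions of type `α`. -/
inductive Formula (α : Type) : Type
  | atom    : α → Formula α
  | natom   : α → Formula α
  | and     : Formula α → Formula α → Formula α
  | or      : Formula α → Formula α → Formula α
  | next    : Formula α → Formula α
  | untl    : Formula α → Formula α → Formula α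
  | release : Formula α → Formula α → Formula α
  | promptF : Formula α → Formula α

variable {α ι ο π : Type}

/-- Satisfaction `(w, n, k) ⊨ φ` (arguments: word `w`, bound `k`, position `n`, formula `φ`). -/
def Sat (w : ℕ → Set α) (k : ℕ) : ℕ → Formula α → Prop
  | n, .atom a => a ∈ w n
  | n, .natom a => a ∉ w n
  | n, .and φ ψ => Sat w k n φ ∧ Sat w k n ψ
  | n, .or φ ψ => Sat w k n φ ∨ Sat w k n ψ
  | n, .next φ => Sat w k (n + 1) φ
  | n, .untl φ ψ => ∃ j : ℕ, Sat w k (n + j) ψ ∧ ∀ m < j, Sat w k (n + m) φ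
  | n, .release φ ψ => ∀ j : ℕ, Sat w k (n + j) ψ ∨ ∃ m < j, Sat w k (n + m) φ
  | n, .promptF φ => ∃ j ≤ k, Sat w k (n + j) φ

/-- A formula is an LTL formula if it contains no prompt eventually operator. -/
def isLTL : Formula α → Prop
  | .atom _ => True
  | .natom _ => True
  | .and φ ψ => isLTL φ ∧ isLTL ψ
  | .or φ ψ => isLTL φ ∧ isLTL ψ
  | .next φ => isLTL φ
  | .untl φ ψ => isLTL φ ∧ isLTL ψ
  | .release φ ψ => isLTL φ ∧ isLTL ψ
  | .promptF _ => False

/-- The set of subformulas of a formula. -/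
def subf : Formula α → Set (Formula α)
  | .atom a => {Formula.atom a}
  | .natom a => {Formula.natom a}
  | .and φ ψ => insert (Formula.and φ ψ) (subf φ ∪ subf ψ)
  | .or φ ψ => insert (Formula.or φ ψ) (subf φ ∪ subf ψ)
  | .next φ => insert (Formula.next φ) (subf φ)
  | .untl φ ψ => insert (Formula.untl φ ψ) (subf φ ∪ subf ψ)
  | .release φ ψ => insert (Formula.release φ ψ) (subf φ ∪ subf ψ)
  | .promptF φ => insert (Formula.promptF φ) (subf φ)

/-- The size `|φ|` of a formula: the number of its subformulas. -/
noncomputable def size (φ : Formula α) : ℕ := (subf φ).ncard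

/-- Relativization `rel(φ)`; the fresh proposition `p ∉ P` is modelled by `none : Option α`. -/
def rel : Formula α → Formula (Option α)
  | .atom a => .atom (some a)
  | .natom a => .natom (some a)
  | .and φ ψ => .and (rel φ) (rel ψ)
  | .or φ ψ => .or (rel φ) (rel ψ)
  | .next φ => .next (rel φ)
  | .untl φ ψ => .untl (rel φ) (rel ψ)
  | .release φ ψ => .release (rel φ) (rel ψ)
  | .promptF φ =>
      .and
        (.or (.natom none) (.untl (.atom none) (.untl (.natom none) (rel φ))))
        (.or (.atom none) (.untl (.natom none) (.untl (.atom none) (rel φ))))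

/-- `w'` is a `p`-coloring of `w`: both agree on all propositions in `P`. -/
def IsColoring (w' : ℕ → Set (Option α)) (w : ℕ → Set α) : Prop :=
  ∀ n a, some a ∈ w' n ↔ a ∈ w n

/-- `n` is a change point of `w'`. -/
def ChangePoint (w' : ℕ → Set (Option α)) (n : ℕ) : Prop :=
  n = 0 ∨ ¬ ((none ∈ w' (n - 1)) ↔ (none ∈ w' n))

/-- `m` and `m'` are adjacent change points (the `p`-block between them has length `m' - m`). -/
def AdjacentCP (w' : ℕ → Set (Option α)) (m m' : ℕ) : Prop :=
  m < m' ∧ ChangePoint w' m ∧ ChangePoint w' m' ∧ ∀ l, m < l → l < m' → ¬ ChangePoint w' l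

/-- The truth value of `p` changes infinitely often in `w'`. -/
def InfCP (w' : ℕ → Set (Option α)) : Prop := ∀ n, ∃ m, n < m ∧ ChangePoint w' m

/-- `w'` is `k`-spaced. -/
def Spaced (k : ℕ) (w' : ℕ → Set (Option α)) : Prop :=
  InfCP w' ∧ ∀ m m', AdjacentCP w' m m' → k ≤ m' - m

/-- `w'` is `k`-bounded. -/
def Bounded (k : ℕ) (w' : ℕ → Set (Option α)) : Prop :=
  InfCP w' ∧ ∀ m m', AdjacentCP w' m m' → m' - m ≤ k

/-- The play consistent with strategy `σ` on input sequence `i`; `fi` and `fo` embed input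
and output propositions into the full set of propositions. -/
def play (fi : ι → π) (fo : ο → π) (i : ℕ → Set ι) (σ : List (Set ι) → Set ο) (n : ℕ) :
    Set π :=
  fi '' i n ∪ fo '' σ ((List.range (n + 1)).map i)

/-- `σ` realizes `φ` with respect to `k`: every consistent play satisfies `φ` w.r.t. `k`. -/
def Realizes (fi : ι → π) (fo : ο → π) (σ : List (Set ι) → Set ο) (k : ℕ)
    (φ : Formula π) : Prop :=
  ∀ i : ℕ → Set ι, Sat (play fi fo i σ) k 0 φ

/-- `upd*`, the extension of `upd` to finite input sequences. -/
def updStar {M : Type} (upd : M → Set ι → M) (m0 : M) (l : List (Set ι)) : M :=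
  l.foldl upd m0

/-- The memory structure `(M, m0, upd)` together with next-move function `nxt` implements `σ`. -/
def Implements {M : Type} (m0 : M) (upd : M → Set ι → M) (nxt : M → Set ι → Set ο)
    (σ : List (Set ι) → Set ο) : Prop :=
  ∀ (l : List (Set ι)) (i : Set ι), σ (l ++ [i]) = nxt (updStar upd m0 l) i

/-- `σ` is a finite-state strategy of size at most `n`. -/
def SizeAtMost (σ : List (Set ι) → Set ο) (n : ℕ) : Prop :=
  ∃ (M : Type) (_ : Fintype M) (m0 : M) (upd : M → Set ι → M) (nxt : M → Set ι → Set ο),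
    Fintype.card M ≤ n ∧ Implements m0 upd nxt σ

/-- The set of realizable parameters `R(φ)` over the partition `(ι, ο)`. -/
def RealParams (φ : Formula (ι ⊕ ο)) : Set (ℕ × ℕ) :=
  {nk : ℕ × ℕ | ∃ σ : List (Set ι) → Set ο,
    SizeAtMost σ nk.1 ∧ Realizes Sum.inl Sum.inr σ nk.2 φ}

/-- `(n, k)` is a Pareto position of `φ` (conditions on `n - 1` resp. `k - 1` are vacuously
true if `n = 0` resp. `k = 0`). -/
def Pareto (φ : Formula (ι ⊕ ο)) (n k : ℕ) : Prop :=
  (n, k) ∈ RealParams φ ∧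
    (n = 0 ∨ (n - 1, k) ∉ RealParams φ) ∧
    (k = 0 ∨ (n, k - 1) ∉ RealParams φ)

/-- `true` as a formula (relative to a fixed atomic proposition `a`). -/
def ltrue (a : α) : Formula α := .or (.atom a) (.natom a)

/-- `false` as a formula (relative to a fixed atomic proposition `a`). -/
def lfalse (a : α) : Formula α := .and (.atom a) (.natom a)

/-- `F φ = true U φ`. -/
def ev (a : α) (φ : Formula α) : Formula α := .untl (ltrue a) φ

/-- `G φ = false R φ`. -/
def glob (a : α) (φ : Formula α) : Formula α := .release (lfalse a) φ

/-- Conjunction of a list of formulas. -/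
def conj (a : α) (l : List (Formula α)) : Formula α := l.foldr Formula.and (ltrue a)

/-- The arbiter formula `φ_{r, rp}`, with `I = {q_1, …, q_r}` modelled as `Sum.inl`-side and
`O = {p_1, …, p_r}` as `Sum.inr`-side of `Fin r ⊕ Fin r`. -/
def arbiter (r rp : ℕ) (hr : 0 < r) : Formula (Fin r ⊕ Fin r) :=
  let q : Fin r → Fin r ⊕ Fin r := Sum.inl
  let pr : Fin r → Fin r ⊕ Fin r := Sum.inr
  let a0 : Fin r ⊕ Fin r := Sum.inl ⟨0, hr⟩
  Formula.and
    (conj a0 (((List.finRange r).filter (fun i => decide (i.val < rp))).map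
      (fun i => glob a0 (Formula.or (.natom (q i)) (.promptF (.atom (pr i)))))))
    (Formula.and
      (conj a0 (((List.finRange r).filter (fun i => decide (rp ≤ i.val))).map
        (fun i => glob a0 (Formula.or (.natom (q i)) (ev a0 (.atom (pr i)))))))
      (conj a0 ((List.finRange r).flatMap (fun i =>
        ((List.finRange r).filter (fun j => decide (i ≠ j))).map
          (fun j => glob a0 (Formula.or (.natom (pr i)) (.natom (pr j))))))))


section Auxx
variable {α ι ο : Type}

lemma sat_mono {w : ℕ → Set α} {k k' : ℕ} (hk : k ≤ k') :
    ∀ (φ : Formula α) (n : ℕ), Sat w k n φ → Sat w k' n φ := by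
  intro φ
  induction φ with
  | atom a => exact fun n h => h
  | natom a => exact fun n h => h
  | and φ ψ ih1 ih2 => exact fun n h => ⟨ih1 n h.1, ih2 n h.2⟩
  | or φ ψ ih1 ih2 => rintro n (h | h); exacts [Or.inl (ih1 n h), Or.inr (ih2 n h)]
  | next φ ih => exact fun n h => ih _ h
  | untl φ ψ ih1 ih2 =>
      rintro n ⟨j, hj, hm⟩; exact ⟨j, ih2 _ hj, fun m hm' => ih1 _ (hm m hm')⟩
  | release φ ψ ih1 ih2 =>
      intro n h j
      rcases h j with h | ⟨m, hm, h⟩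
      · exact Or.inl (ih2 _ h)
      · exact Or.inr ⟨m, hm, ih1 _ h⟩
  | promptF φ ih =>
      rintro n ⟨j, hj, h⟩; exact ⟨j, hj.trans hk, ih _ h⟩

lemma untl_helper (w' : ℕ → Set (Option α)) (A B r : Formula (Option α)) (k n j c : ℕ)
    (hj : j ≤ k) (hc : n < c)
    (hr : Sat w' 0 (n + j) r)
    (hA : ∀ m, n ≤ m → m < c → Sat w' 0 m A)
    (hB : ∀ m, c ≤ m → m ≤ n + k → Sat w' 0 m B) :
    Sat w' 0 n (.untl A (.untl B r)) := by
  by_cases hjc : n + j < c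
  · exact ⟨j, ⟨0, by simpa using hr, fun m hm => absurd hm (by omega)⟩,
      fun m hm => hA _ (by omega) (by omega)⟩
  · refine ⟨c - n, ⟨n + j - c, ?_, fun m hm => hB _ (by omega) (by omega)⟩,
      fun m hm => hA _ (by omega) (by omega)⟩
    have h1 : n + (c - n) + (n + j - c) = n + j := by omega
    rw [h1]; exact hr

lemma rel_of_sat {w : ℕ → Set α} {w' : ℕ → Set (Option α)} {k : ℕ}
    (hc : IsColoring w' w)
    (hH : ∀ n, ∃ c, n < c ∧ (∀ m, n ≤ m → m < c → ((none ∈ w' m) ↔ (none ∈ w' n)))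
        ∧ (∀ m, c ≤ m → m ≤ n + k → ¬((none ∈ w' m) ↔ (none ∈ w' n)))) :
    ∀ (φ : Formula α) (n : ℕ), Sat w k n φ → Sat w' 0 n (rel φ) := by
  intro φ
  induction φ with
  | atom a => exact fun n h => (hc n a).mpr h
  | natom a => exact fun n h hx => h ((hc n a).mp hx)
  | and _ _ ih1 ih2 => exact fun n h => ⟨ih1 n h.1, ih2 n h.2⟩
  | or _ _ ih1 ih2 => rintro n (h | h); exacts [Or.inl (ih1 n h), Or.inr (ih2 n h)]
  | next _ ih => exact fun n h => ih _ h
  | untl _ _ ih1 ih2 =>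
      rintro n ⟨j, hj, hm⟩; exact ⟨j, ih2 _ hj, fun m hm' => ih1 _ (hm m hm')⟩
  | release _ _ ih1 ih2 =>
      intro n h j
      rcases h j with h | ⟨m, hm, h⟩
      · exact Or.inl (ih2 _ h)
      · exact Or.inr ⟨m, hm, ih1 _ h⟩
  | promptF φ ih =>
      rintro n ⟨j, hj, hφ⟩
      have hr := ih _ hφ
      obtain ⟨c, hnc, heq, hne⟩ := hH n
      by_cases hp : none ∈ w' n
      · refine ⟨Or.inr ?_, Or.inl hp⟩
        exact untl_helper w' _ _ _ k n j c hj hnc hr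
          (fun m h1 h2 => (heq m h1 h2).mpr hp)
          (fun m h1 h2 hx => hne m h1 h2 (iff_of_true hx hp))
      · refine ⟨Or.inl hp, Or.inr ?_⟩
        exact untl_helper w' _ _ _ k n j c hj hnc hr
          (fun m h1 h2 hx => hp ((heq m h1 h2).mp hx))
          (fun m h1 h2 => by
            by_contra hx
            exact hne m h1 h2 (iff_of_false hx hp))

lemma two_until_bound {k : ℕ} {V R : ℕ → Prop}
    (hflip : ∀ n, ∃ j, 1 ≤ j ∧ j ≤ k ∧ ¬(V (n + j) ↔ V n)) {n : ℕ} (hV : V n)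
    {j1 j2 : ℕ} (hR : R (n + j1 + j2))
    (hB : ∀ m, m < j2 → ¬ V (n + j1 + m)) (hA : ∀ m, m < j1 → V (n + m)) :
    ∃ t, t ≤ k + k ∧ R (n + t) := by
  have hj1 : j1 ≤ k := by
    by_contra hgt
    obtain ⟨j, h1, h2, h3⟩ := hflip n
    exact h3 (iff_of_true (hA j (by omega)) hV)
  have hj2 : j2 ≤ k := by
    by_contra hgt
    obtain ⟨j, h1, h2, h3⟩ := hflip (n + j1)
    exact h3 (iff_of_false (hB j (by omega)) (by simpa using hB 0 (by omega)))
  exact ⟨j1 + j2, by omega, by rwa [← Nat.add_assoc]⟩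

lemma sat_of_rel {w : ℕ → Set α} {w' : ℕ → Set (Option α)} {k : ℕ}
    (hc : IsColoring w' w)
    (hflip : ∀ n, ∃ j, 1 ≤ j ∧ j ≤ k ∧ ¬((none ∈ w' (n + j)) ↔ (none ∈ w' n))) :
    ∀ (φ : Formula α) (n : ℕ), Sat w' 0 n (rel φ) → Sat w (k + k) n φ := by
  intro φ
  induction φ with
  | atom a => exact fun n h => (hc n a).mp h
  | natom a => exact fun n h hx => h ((hc n a).mpr hx)
  | and _ _ ih1 ih2 => exact fun n h => ⟨ih1 n h.1, ih2 n h.2⟩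
  | or _ _ ih1 ih2 => rintro n (h | h); exacts [Or.inl (ih1 n h), Or.inr (ih2 n h)]
  | next _ ih => exact fun n h => ih _ h
  | untl _ _ ih1 ih2 =>
      rintro n ⟨j, hj, hm⟩; exact ⟨j, ih2 _ hj, fun m hm' => ih1 _ (hm m hm')⟩
  | release _ _ ih1 ih2 =>
      intro n h j
      rcases h j with h | ⟨m, hm, h⟩
      · exact Or.inl (ih2 _ h)
      · exact Or.inr ⟨m, hm, ih1 _ h⟩
  | promptF φ ih =>
      rintro n ⟨h1, h2⟩
      by_cases hp : none ∈ w' n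
      · rcases h1 with h1 | h1
        · exact absurd hp h1
        · obtain ⟨j1, ⟨j2, hr, hB⟩, hA⟩ := h1
          obtain ⟨t, ht, hrt⟩ := two_until_bound (V := fun m => none ∈ w' m)
            (R := fun m => Sat w' 0 m (rel φ)) hflip hp hr hB hA
          exact ⟨t, ht, ih _ hrt⟩
      · rcases h2 with h2 | h2
        · exact absurd h2 hp
        · obtain ⟨j1, ⟨j2, hr, hB⟩, hA⟩ := h2
          have hflip' : ∀ n', ∃ j, 1 ≤ j ∧ j ≤ k ∧
              ¬((none ∉ w' (n' + j)) ↔ (none ∉ w' n')) := by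
            intro n'
            obtain ⟨j, a, b, c⟩ := hflip n'
            exact ⟨j, a, b, by tauto⟩
          obtain ⟨t, ht, hrt⟩ := two_until_bound (V := fun m => none ∉ w' m)
            (R := fun m => Sat w' 0 m (rel φ)) hflip' hp hr (fun m hm => not_not.mpr (hB m hm)) hA
          exact ⟨t, ht, ih _ hrt⟩

end Auxx
section Auxx2
variable {α ι ο : Type}

def nextIter : ℕ → Formula α → Formula α
  | 0, φ => φ
  | j + 1, φ => .next (nextIter j φ)

lemma sat_nextIter {w : ℕ → Set α} {kk : ℕ} (φ : Formula α) :
    ∀ (j n : ℕ), Sat w kk n (nextIter j φ) ↔ Sat w kk (n + j) φ := by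
  intro j
  induction j with
  | zero => intro n; simp [nextIter]
  | succ j ih =>
      intro n
      have e : n + 1 + j = n + (j + 1) := by omega
      show Sat w kk (n + 1) (nextIter j φ) ↔ _
      rw [ih, e]

def flipF (j : ℕ) : Formula (Option α) :=
  .or (.and (.atom none) (nextIter j (.natom none)))
      (.and (.natom none) (nextIter j (.atom none)))

lemma sat_flipF {w' : ℕ → Set (Option α)} (j n : ℕ) :
    Sat w' 0 n (flipF j) ↔ ¬((none ∈ w' (n + j)) ↔ (none ∈ w' n)) := by
  show (_ ∧ Sat w' 0 n (nextIter j (.natom none))) ∨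
    (_ ∧ Sat w' 0 n (nextIter j (.atom none))) ↔ _
  rw [sat_nextIter, sat_nextIter]
  show ((none ∈ w' n) ∧ (none ∉ w' (n + j))) ∨ ((none ∉ w' n) ∧ (none ∈ w' (n + j))) ↔ _
  tauto

def bigOr : ℕ → Formula (Option α)
  | 0 => lfalse none
  | j + 1 => .or (flipF (j + 1)) (bigOr j)

lemma sat_bigOr {w' : ℕ → Set (Option α)} :
    ∀ (kk n : ℕ), Sat w' 0 n (bigOr kk) ↔
      ∃ j, 1 ≤ j ∧ j ≤ kk ∧ ¬((none ∈ w' (n + j)) ↔ (none ∈ w' n)) := by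
  intro kk
  induction kk with
  | zero =>
      intro n
      constructor
      · rintro ⟨h1, h2⟩; exact absurd h1 h2
      · rintro ⟨j, h1, h2, _⟩; omega
  | succ kk ih =>
      intro n
      show Sat w' 0 n (flipF (kk + 1)) ∨ Sat w' 0 n (bigOr kk) ↔ _
      rw [sat_flipF, ih]
      constructor
      · rintro (h | ⟨j, h1, h2, h3⟩)
        · exact ⟨kk + 1, by omega, le_refl _, h⟩
        · exact ⟨j, h1, by omega, h3⟩
      · rintro ⟨j, h1, h2, h3⟩
        rcases Nat.lt_or_ge j (kk + 1) with hlt | hge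
        · exact Or.inr ⟨j, h1, by omega, h3⟩
        · left; have : j = kk + 1 := by omega
          rwa [this] at h3

def psiF (kk : ℕ) : Formula (Option α) := glob none (bigOr kk)

lemma sat_psiF {w' : ℕ → Set (Option α)} (kk : ℕ) :
    Sat w' 0 0 (psiF kk) ↔
      ∀ n, ∃ j, 1 ≤ j ∧ j ≤ kk ∧ ¬((none ∈ w' (n + j)) ↔ (none ∈ w' n)) := by
  constructor
  · intro h n
    rcases h n with h | ⟨m, _, hm⟩
    · rw [← sat_bigOr]; simpa using h
    · exact absurd hm.1 hm.2
  · intro h n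
    left
    rw [show (0 + n) = n from by omega, sat_bigOr]
    exact h n

lemma isLTL_nextIter (j : ℕ) (φ : Formula α) (h : isLTL φ) : isLTL (nextIter j φ) := by
  induction j with
  | zero => exact h
  | succ j ih => exact ih

lemma isLTL_bigOr (kk : ℕ) : isLTL (bigOr kk : Formula (Option α)) := by
  induction kk with
  | zero => exact ⟨trivial, trivial⟩
  | succ kk ih =>
      exact ⟨⟨⟨trivial, isLTL_nextIter _ _ trivial⟩, ⟨trivial, isLTL_nextIter _ _ trivial⟩⟩, ih⟩

lemma isLTL_psiF (kk : ℕ) : isLTL (psiF kk : Formula (Option α)) :=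
  ⟨⟨trivial, trivial⟩, isLTL_bigOr kk⟩

lemma flip_cp {w' : ℕ → Set (Option α)} :
    ∀ (j n : ℕ), 1 ≤ j → ¬((none ∈ w' (n + j)) ↔ (none ∈ w' n)) →
      ∃ t, n < t ∧ t ≤ n + j ∧ ChangePoint w' t := by
  intro j
  induction j with
  | zero => intro n h; omega
  | succ j ih =>
      intro n _ hne
      by_cases h : (none ∈ w' (n + j)) ↔ (none ∈ w' n)
      · refine ⟨n + j + 1, by omega, le_refl _, Or.inr ?_⟩
        rw [show n + j + 1 - 1 = n + j from by omega]
        tauto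
      · rcases Nat.eq_zero_or_pos j with hj | hj
        · subst hj; simp at h
        · obtain ⟨t, h1, h2, h3⟩ := ih n hj h
          exact ⟨t, h1, by omega, h3⟩

lemma flip_bounded {w' : ℕ → Set (Option α)} {k : ℕ}
    (hflip : ∀ n, ∃ j, 1 ≤ j ∧ j ≤ k ∧ ¬((none ∈ w' (n + j)) ↔ (none ∈ w' n))) :
    Bounded k w' := by
  constructor
  · intro n
    obtain ⟨j, h1, h2, h3⟩ := hflip n
    obtain ⟨t, ht1, ht2, ht3⟩ := flip_cp j n h1 h3
    exact ⟨t, ht1, ht3⟩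
  · rintro m m' ⟨hlt, hcm, hcm', hbet⟩
    by_contra hgt
    obtain ⟨j, h1, h2, h3⟩ := hflip m
    obtain ⟨t, ht1, ht2, ht3⟩ := flip_cp j m h1 h3
    exact hbet t ht1 (by omega) ht3

lemma const_between {w' : ℕ → Set (Option α)} {n m' : ℕ}
    (h : ∀ l, n < l → l < m' → ¬ ChangePoint w' l) :
    ∀ d, n + d < m' → ((none ∈ w' (n + d)) ↔ (none ∈ w' n)) := by
  intro d
  induction d with
  | zero => intro _; exact Iff.rfl
  | succ d ih =>
      intro hd
      have hd' : n + d + 1 < m' := by omega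
      have hncp := h (n + d + 1) (by omega) hd'
      have h2 : (none ∈ w' (n + d)) ↔ (none ∈ w' (n + d + 1)) := by
        by_contra hx
        apply hncp
        right
        rwa [show n + d + 1 - 1 = n + d from by omega]
      exact (h2.symm.trans (ih (by omega)))

lemma bounded_flip {w' : ℕ → Set (Option α)} {k : ℕ} (hb : Bounded k w') :
    ∀ n, ∃ j, 1 ≤ j ∧ j ≤ k ∧ ¬((none ∈ w' (n + j)) ↔ (none ∈ w' n)) := by
  classical
  obtain ⟨hinf, hblk⟩ := hb
  intro n
  have hcp0 : ChangePoint w' 0 := Or.inl rfl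
  set m := Nat.findGreatest (fun t => ChangePoint w' t) n with hm
  have hcpm : ChangePoint w' m := Nat.findGreatest_spec (Nat.zero_le n) hcp0
  have hmn : m ≤ n := Nat.findGreatest_le n
  have hex : ∃ t, n < t ∧ ChangePoint w' t := hinf n
  set m' := Nat.find hex with hm'
  obtain ⟨hnm', hcpm'⟩ := Nat.find_spec hex
  have hnocp : ∀ l, n < l → l < m' → ¬ ChangePoint w' l :=
    fun l h1 h2 hcpl => Nat.find_min hex h2 ⟨h1, hcpl⟩
  have hadj : AdjacentCP w' m m' := by
    refine ⟨by omega, hcpm, hcpm', fun l h1 h2 hcpl => ?_⟩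
    rcases le_or_gt l n with hl | hl
    · exact Nat.findGreatest_is_greatest h1 hl hcpl
    · exact hnocp l hl h2 hcpl
  have hk' : m' - m ≤ k := hblk m m' hadj
  refine ⟨m' - n, by omega, by omega, ?_⟩
  have hv : (none ∈ w' (m' - 1)) ↔ (none ∈ w' n) := by
    have := const_between hnocp (m' - 1 - n) (by omega)
    rwa [show n + (m' - 1 - n) = m' - 1 from by omega] at this
  have hne : ¬((none ∈ w' (m' - 1)) ↔ (none ∈ w' m')) := by
    rcases hcpm' with h | h
    · omega
    · exact h
  rw [show n + (m' - n) = m' from by omega]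
  tauto

def col (k n : ℕ) : Prop := (n / k) % 2 = 0

lemma col_flip {k : ℕ} (hk : 1 ≤ k) (n : ℕ) : ¬(col k (n + k) ↔ col k n) := by
  unfold col
  rw [Nat.add_div_right n hk]
  omega

lemma col_H {k : ℕ} (hk : 1 ≤ k) (n : ℕ) :
    ∃ c, n < c ∧ (∀ m, n ≤ m → m < c → (col k m ↔ col k n)) ∧
      (∀ m, c ≤ m → m ≤ n + k → ¬(col k m ↔ col k n)) := by
  have hk0 : 0 < k := hk
  have hlt : n < k * (n / k) + k := by
    have h1 := Nat.div_add_mod n k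
    have h2 := Nat.mod_lt n hk0
    omega
  refine ⟨k * (n / k) + k, hlt, ?_, ?_⟩
  · intro m h1 h2
    have ha : n / k ≤ m / k := Nat.div_le_div_right h1
    have hb : m / k < n / k + 1 := by
      rw [Nat.div_lt_iff_lt_mul hk0]
      calc m < k * (n / k) + k := h2
        _ = (n / k + 1) * k := by ring
    have : m / k = n / k := by omega
    unfold col; rw [this]
  · intro m h1 h2
    have ha : n / k + 1 ≤ m / k := by
      rw [Nat.le_div_iff_mul_le hk0]
      calc (n / k + 1) * k = k * (n / k) + k := by ring
        _ ≤ m := h1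
    have hb : m / k < n / k + 2 := by
      rw [Nat.div_lt_iff_lt_mul hk0]
      calc m ≤ n + k := h2
        _ < k * (n / k) + k + k := by omega
        _ = (n / k + 2) * k := by ring
    have he : m / k = n / k + 1 := by omega
    unfold col; rw [he]; omega

end Auxx2
section Auxx3
variable {ι ο : Type}

def sigmaC (k : ℕ) (σ : List (Set ι) → Set ο) (l : List (Set ι)) : Set (Option ο) :=
  {x | (∃ b ∈ σ l, x = some b) ∨ (x = none ∧ col k (l.length - 1))}

lemma len_aux (i : ℕ → Set ι) (n : ℕ) :
    ((List.range (n + 1)).map i).length - 1 = n := by simp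

lemma mem_playC_some (k : ℕ) (σ : List (Set ι) → Set ο) (i : ℕ → Set ι) (n : ℕ)
    (x : ι ⊕ ο) :
    some x ∈ play (fun a => some (Sum.inl a)) (Option.map Sum.inr) i (sigmaC k σ) n ↔
      x ∈ play Sum.inl Sum.inr i σ n := by
  simp only [play, Set.mem_union, Set.mem_image, sigmaC, Set.mem_setOf_eq]
  constructor
  · rintro (⟨a, ha, he⟩ | ⟨y, (⟨b, hb, rfl⟩ | ⟨rfl, _⟩), he⟩)
    · cases he; exact Or.inl ⟨a, ha, rfl⟩
    · simp only [Option.map_some] at he; cases he; exact Or.inr ⟨b, hb, rfl⟩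
    · simp at he
  · rintro (⟨a, ha, rfl⟩ | ⟨b, hb, rfl⟩)
    · exact Or.inl ⟨a, ha, rfl⟩
    · exact Or.inr ⟨some b, Or.inl ⟨b, hb, rfl⟩, rfl⟩

lemma mem_playC_none (k : ℕ) (σ : List (Set ι) → Set ο) (i : ℕ → Set ι) (n : ℕ) :
    (none ∈ play (fun a => some (Sum.inl a)) (Option.map Sum.inr) i (sigmaC k σ) n) ↔
      col k n := by
  simp only [play, Set.mem_union, Set.mem_image, sigmaC, Set.mem_setOf_eq]
  constructor
  · rintro (⟨a, _, he⟩ | ⟨y, (⟨b, hb, rfl⟩ | ⟨rfl, hcol⟩), he⟩)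
    · simp at he
    · simp at he
    · rwa [len_aux] at hcol
  · intro hcol
    exact Or.inr ⟨none, Or.inr ⟨rfl, by rwa [len_aux]⟩, rfl⟩

def sigmaD (σ' : List (Set ι) → Set (Option ο)) (l : List (Set ι)) : Set ο :=
  {b | some b ∈ σ' l}

lemma mem_playD_some (σ' : List (Set ι) → Set (Option ο)) (i : ℕ → Set ι) (n : ℕ)
    (x : ι ⊕ ο) :
    some x ∈ play (fun a => some (Sum.inl a)) (Option.map Sum.inr) i σ' n ↔
      x ∈ play Sum.inl Sum.inr i (sigmaD σ') n := by
  simp only [play, Set.mem_union, Set.mem_image, sigmaD, Set.mem_setOf_eq]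
  constructor
  · rintro (⟨a, ha, he⟩ | ⟨y, hy, he⟩)
    · cases he; exact Or.inl ⟨a, ha, rfl⟩
    · match y, he with
      | some b, he =>
          simp only [Option.map_some] at he; cases he
          exact Or.inr ⟨b, hy, rfl⟩
  · rintro (⟨a, ha, rfl⟩ | ⟨b, hb, rfl⟩)
    · exact Or.inl ⟨a, ha, rfl⟩
    · exact Or.inr ⟨some b, hb, rfl⟩

end Auxx3

theorem realizable_iff_rel_realizable (ι ο : Type) [Fintype ι] [Fintype ο]
    (φ : Formula (ι ⊕ ο)) :
    (∃ (σ : List (Set ι) → Set ο) (k : ℕ), Realizes Sum.inl Sum.inr σ k φ) ↔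
    (∃ k : ℕ, 1 ≤ k ∧ ∀ ψ : Formula (Option (ι ⊕ ο)),
      isLTL ψ → (∀ w' : ℕ → Set (Option (ι ⊕ ο)), Sat w' 0 0 ψ ↔ Bounded k w') →
      ∃ σ' : List (Set ι) → Set (Option ο),
        Realizes (fun a => some (Sum.inl a)) (Option.map Sum.inr) σ' 0
          (Formula.and (rel φ) ψ)) := by
  constructor
  · rintro ⟨σ, k0, hσ⟩
    refine ⟨max k0 1, le_max_right _ _, ?_⟩
    set k := max k0 1 with hkdef
    have hk1 : 1 ≤ k := le_max_right _ _
    intro ψ hLTL hψ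
    refine ⟨sigmaC k σ, fun i => ?_⟩
    set w' := play (fun a => some (Sum.inl a)) (Option.map Sum.inr) i (sigmaC k σ) with hw'
    set w := play Sum.inl Sum.inr i σ with hw
    have hcol : IsColoring w' w := fun n x => mem_playC_some k σ i n x
    have hnone : ∀ m, (none ∈ w' m) ↔ col k m := fun m => mem_playC_none k σ i m
    have hplay : Sat w k 0 φ := sat_mono (le_max_left _ _) φ 0 (hσ i)
    refine ⟨?_, ?_⟩
    · refine rel_of_sat hcol (fun n => ?_) φ 0 hplay
      obtain ⟨c, h1, h2, h3⟩ := col_H hk1 n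
      refine ⟨c, h1, fun m hm1 hm2 => ?_, fun m hm1 hm2 => ?_⟩
      · rw [hnone, hnone]; exact h2 m hm1 hm2
      · rw [hnone, hnone]; exact h3 m hm1 hm2
    · rw [hψ]
      refine flip_bounded (fun n => ⟨k, hk1, le_refl _, ?_⟩)
      rw [hnone, hnone]
      exact col_flip hk1 n
  · rintro ⟨k, hk, h⟩
    obtain ⟨σ', hσ'⟩ := h (psiF k) (isLTL_psiF k)
      (fun w' => (sat_psiF k).trans ⟨flip_bounded, bounded_flip⟩)
    refine ⟨sigmaD σ', k + k, fun i => ?_⟩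
    obtain ⟨hrel, hpsi⟩ := hσ' i
    set w' := play (fun a => some (Sum.inl a)) (Option.map Sum.inr) i σ' with hw'
    have hcol : IsColoring w' (play Sum.inl Sum.inr i (sigmaD σ')) :=
      fun n x => mem_playD_some σ' i n x
    exact sat_of_rel hcol ((sat_psiF k).mp hpsi) φ 0 hrel

end PromptPaper
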